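/- Let G be a finite connected simple graph and let s ≠ t be two of its vertices. Assign to each edge of G independently the weight 0 with probability 1/2 and the weight 1 with probability 1/2, and let G′ be the multigraph obtained from G by adding one extra edge between s and t of fixed weight 1. Then the expected weighted distance from s to t in G′ equals the probability that s and t lie in different connected components of the spanning subgraph of G consisting of the edges that received weight 0. -/

import Mathlib

open MeasureTheory ProbabilityTheory Finset

/-- `WalkCost ends w u v c` says that in the multigraph with endpoint map
`ends : E → Sym2 V` and edge weights `w : E → ℝ` there is a walk from `u` to `v`
whose total weight is `c`. -/
def WalkCost {V E : Type*} (ends : E → Sym2 V) (w : E → ℝ) (u v : V) (c : ℝ) : Prop :=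
  ∃ (k : ℕ) (vs : Fin (k + 1) → V) (es : Fin k → E),
    vs 0 = u ∧ vs (Fin.last k) = v ∧
    (∀ i : Fin k, ends (es i) = s(vs i.castSucc, vs i.succ)) ∧
    c = ∑ i, w (es i)

/-- The weighted distance between two vertices of a multigraph: the infimum of the
total weight over all walks joining them. -/
noncomputable def mdist {V E : Type*} (ends : E → Sym2 V) (w : E → ℝ) (u v : V) : ℝ :=
  sInf {c | WalkCost ends w u v c}

lemma WalkCost.nil {V E : Type*} (ends : E → Sym2 V) (w : E → ℝ) (u : V) :
    WalkCost ends w u u 0 :=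
  ⟨0, fun _ => u, Fin.elim0, rfl, rfl, fun i => i.elim0, by simp⟩

lemma WalkCost.cons {V E : Type*} {ends : E → Sym2 V} {w : E → ℝ} {u x v : V} {c : ℝ}
    (e : E) (h2 : WalkCost ends w x v c) (h : ends e = s(u, x)) :
    WalkCost ends w u v (w e + c) := by
  obtain ⟨k, vs, es, h0, hl, hadj, hc⟩ := h2
  refine ⟨k + 1, Fin.cons u vs, Fin.cons e es, by simp, ?_, ?_, ?_⟩
  · rw [show Fin.last (k+1) = (Fin.last k).succ from rfl, Fin.cons_succ]; exact hl
  · intro i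
    refine Fin.cases ?_ (fun j => ?_) i
    · simpa [Fin.succ_zero_eq_one, show ((0:Fin (k+1)).castSucc) = 0 from rfl, h0] using h
    · have h1 : (j.succ).castSucc = (j.castSucc).succ := by
        exact Fin.ext rfl
      rw [Fin.cons_succ, h1, Fin.cons_succ, Fin.cons_succ]
      exact hadj j
  · simp [Fin.sum_univ_succ, hc]

lemma walkcost_nonneg {V E : Type*} {ends : E → Sym2 V} {w : E → ℝ}
    (hw : ∀ e, 0 ≤ w e) {u v : V} {c : ℝ} (h : WalkCost ends w u v c) : 0 ≤ c := by
  obtain ⟨k, vs, es, _, _, _, hc⟩ := h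
  exact hc ▸ Finset.sum_nonneg fun i _ => hw _

open scoped Classical in
lemma key_mdist {V : Type*} (G : SimpleGraph V) (s t : V) (hst : s ≠ t)
    (y : G.edgeSet → ℝ) (hy : ∀ e, y e = 0 ∨ y e = 1) :
    mdist (Sum.elim (fun e : G.edgeSet => (e : Sym2 V)) (fun _ : Unit => s(s, t)))
        (Sum.elim (fun e : G.edgeSet => y e) (fun _ : Unit => (1 : ℝ))) s t
      = if (SimpleGraph.fromEdgeSet {p | ∃ e : G.edgeSet, (e : Sym2 V) = p ∧ y e = 0}).Reachable s t
        then 0 else 1 := by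
  set ends := Sum.elim (fun e : G.edgeSet => (e : Sym2 V)) (fun _ : Unit => s(s, t)) with hends
  set w := Sum.elim (fun e : G.edgeSet => y e) (fun _ : Unit => (1 : ℝ)) with hw
  set H := SimpleGraph.fromEdgeSet {p | ∃ e : G.edgeSet, (e : Sym2 V) = p ∧ y e = 0} with hH
  have hwnn : ∀ f, 0 ≤ w f := by
    rintro (e | u)
    · rcases hy e with h | h <;> simp [hw, h]
    · simp [hw]
  have hbdd : BddBelow {c | WalkCost ends w s t c} :=
    ⟨0, fun c hc => walkcost_nonneg hwnn hc⟩
  have mem1 : (1 : ℝ) ∈ {c | WalkCost ends w s t c} := by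
    refine ⟨1, ![s, t], fun _ => Sum.inr (), rfl, rfl, ?_, ?_⟩
    · intro i
      fin_cases i
      simp [hends]
    · simp [hw]
  by_cases hR : H.Reachable s t
  · rw [if_pos hR]
    have hwalk : ∀ (a b : V), H.Walk a b → WalkCost ends w a b 0 := by
      intro a0 b0 p
      induction p with
      | nil => exact WalkCost.nil ends w _
      | @cons a b c h p ih =>
        rw [hH, SimpleGraph.fromEdgeSet_adj] at h
        obtain ⟨⟨e, he, hye⟩, hne⟩ := h
        have := WalkCost.cons (ends := ends) (w := w) (u := a) (x := b) (v := c)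
          (Sum.inl e) ih (by simp [hends, he])
        simpa [hw, hye] using this
    obtain ⟨p⟩ := hR
    have mem0 : (0 : ℝ) ∈ {c | WalkCost ends w s t c} := hwalk _ _ p
    exact le_antisymm (csInf_le hbdd mem0)
      (le_csInf ⟨0, mem0⟩ fun c hc => walkcost_nonneg hwnn hc)
  · rw [if_neg hR]
    have hlb : ∀ c ∈ {c | WalkCost ends w s t c}, (1 : ℝ) ≤ c := by
      intro c hc
      by_contra hlt
      push_neg at hlt
      obtain ⟨k, vs, es, hv0, hvl, hadj, hcsum⟩ := hc
      have hall0 : ∀ i : Fin k, w (es i) = 0 := by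
        intro i
        rcases (show w (es i) = 0 ∨ w (es i) = 1 by
          rcases es i with e | u
          · exact hy e
          · right; simp [hw]) with h | h
        · exact h
        · exfalso
          have : (1 : ℝ) ≤ c := by
            rw [hcsum, ← h]
            exact Finset.single_le_sum (fun j _ => hwnn (es j)) (Finset.mem_univ i)
          linarith
      have hreach : ∀ j : Fin (k + 1), H.Reachable (vs 0) (vs j) := by
        intro j
        induction j using Fin.induction with
        | zero => exact SimpleGraph.Reachable.refl _
        | succ j ih =>
          refine ih.trans (SimpleGraph.Adj.reachable ?_)
          have h0i := hall0 j
          rcases hes : es j with e | u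
          · rw [hes] at h0i
            have hye : y e = 0 := by simpa [hw] using h0i
            have hee : (e : Sym2 V) = s(vs j.castSucc, vs j.succ) := by
              have := hadj j; rw [hes] at this; simpa [hends] using this
            have hne : vs j.castSucc ≠ vs j.succ := by
              have he2 := e.2
              rw [hee] at he2
              exact (G.mem_edgeSet.mp he2).ne
            rw [hH, SimpleGraph.fromEdgeSet_adj]
            exact ⟨⟨e, hee, hye⟩, hne⟩
          · rw [hes] at h0i
            exfalso; simp [hw] at h0i
      exact hR (hv0 ▸ hvl ▸ hreach (Fin.last k))
    exact le_antisymm (csInf_le hbdd mem1) (le_csInf ⟨1, mem1⟩ hlb)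

/-- **The hardness reduction identity.** Let `G` be a finite connected simple graph and
`s ≠ t` two of its vertices. Give each edge of `G` independently the weight `0` with
probability `1/2` and the weight `1` with probability `1/2`, and let `G'` be the
multigraph obtained from `G` by adding one extra `(s,t)`-edge of fixed weight `1`
(its edge type is `↥G.edgeSet ⊕ Unit`). Then the expected weighted distance from `s`
to `t` in `G'` equals the probability that `s` and `t` lie in different connected
components of the spanning subgraph of `G` formed by the edges of weight `0`. -/
theorem expected_distance_eq_disconnection_probability
    {V : Type*} [Fintype V] (G : SimpleGraph V) (hG : G.Connected)
    (s t : V) (hst : s ≠ t)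
    {Ω : Type*} [MeasurableSpace Ω] (P : Measure Ω) [IsProbabilityMeasure P]
    (X : G.edgeSet → Ω → ℝ)
    (hmeas : ∀ e, Measurable (X e))
    (hindep : iIndepFun X P)
    (h0 : ∀ e, P {ω | X e ω = 0} = 1 / 2)
    (h1 : ∀ e, P {ω | X e ω = 1} = 1 / 2) :
    ∫ ω, mdist (Sum.elim (fun e : G.edgeSet => (e : Sym2 V)) (fun _ : Unit => s(s, t)))
        (Sum.elim (fun e : G.edgeSet => X e ω) (fun _ : Unit => (1 : ℝ))) s t ∂P
      = (P {ω | ¬ (SimpleGraph.fromEdgeSet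
          {p | ∃ e : G.edgeSet, (e : Sym2 V) = p ∧ X e ω = 0}).Reachable s t}).toReal := by
  classical
  set A : Set Ω := {ω | ¬ (SimpleGraph.fromEdgeSet
      {p | ∃ e : G.edgeSet, (e : Sym2 V) = p ∧ X e ω = 0}).Reachable s t} with hA_def
  have hcnt : Countable G.edgeSet := Countable.of_equiv _ (Equiv.refl _)
  -- measurability of A
  have hA : MeasurableSet A := by
    have hrepr : A = ⋃ (T : Set G.edgeSet)
        (_ : ¬ (SimpleGraph.fromEdgeSet
          {p | ∃ e : G.edgeSet, (e : Sym2 V) = p ∧ e ∈ T}).Reachable s t),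
        ⋂ e : G.edgeSet, {ω | X e ω = 0 ↔ e ∈ T} := by
      ext ω
      simp only [hA_def, Set.mem_iUnion, Set.mem_iInter, Set.mem_setOf_eq]
      constructor
      · intro h
        exact ⟨{e | X e ω = 0}, h, fun e => Iff.rfl⟩
      · rintro ⟨T, hT, hTe⟩ h'
        apply hT
        have hgr : {p | ∃ e : G.edgeSet, (e : Sym2 V) = p ∧ e ∈ T}
            = {p | ∃ e : G.edgeSet, (e : Sym2 V) = p ∧ X e ω = 0} := by
          ext p
          exact exists_congr fun e => and_congr_right fun _ => (hTe e).symm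
        rw [hgr]
        exact h'
    rw [hrepr]
    refine MeasurableSet.iUnion fun T => MeasurableSet.iUnion fun _ =>
      MeasurableSet.iInter fun e => ?_
    by_cases he : e ∈ T
    · have : {ω | X e ω = 0 ↔ e ∈ T} = X e ⁻¹' {0} := by ext ω; simp [he]
      rw [this]; exact hmeas e (measurableSet_singleton 0)
    · have : {ω | X e ω = 0 ↔ e ∈ T} = (X e ⁻¹' {0})ᶜ := by ext ω; simp [he]
      rw [this]; exact (hmeas e (measurableSet_singleton 0)).compl
  -- the good set
  set N : Set Ω := {ω | ∀ e : G.edgeSet, X e ω = 0 ∨ X e ω = 1} with hN_def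
  have hNnull : P Nᶜ = 0 := by
    have : Nᶜ = ⋃ e : G.edgeSet, ({ω | X e ω = 0} ∪ {ω | X e ω = 1})ᶜ := by
      ext ω; simp [hN_def, not_or]
    rw [this]
    refine measure_iUnion_null fun e => ?_
    have hm0 : MeasurableSet {ω | X e ω = 0} := hmeas e (measurableSet_singleton 0)
    have hm1 : MeasurableSet {ω | X e ω = 1} := hmeas e (measurableSet_singleton 1)
    have hU : P ({ω | X e ω = 0} ∪ {ω | X e ω = 1}) = 1 := by
      rw [measure_union (by
        apply Set.disjoint_left.mpr
        intro ω hω0 hω1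
        simp only [Set.mem_setOf_eq] at hω0 hω1
        rw [hω0] at hω1; norm_num at hω1) hm1, h0 e, h1 e]
      simp [one_div, ENNReal.inv_two_add_inv_two]
    rw [measure_compl (hm0.union hm1) (by simp [hU]), hU, measure_univ, tsub_self]
  -- pointwise equality on N
  have hpt : ∀ ω ∈ N,
      mdist (Sum.elim (fun e : G.edgeSet => (e : Sym2 V)) (fun _ : Unit => s(s, t)))
        (Sum.elim (fun e : G.edgeSet => X e ω) (fun _ : Unit => (1 : ℝ))) s t
      = A.indicator (fun _ => (1 : ℝ)) ω := by
    intro ω hω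
    rw [key_mdist G s t hst (fun e => X e ω) hω]
    by_cases hR : (SimpleGraph.fromEdgeSet
        {p | ∃ e : G.edgeSet, (e : Sym2 V) = p ∧ X e ω = 0}).Reachable s t
    · rw [if_pos hR, Set.indicator_of_notMem (fun h : ω ∈ A => h hR)]
    · rw [if_neg hR, Set.indicator_of_mem (show ω ∈ A from hR)]
  have hae : (fun ω => mdist (Sum.elim (fun e : G.edgeSet => (e : Sym2 V)) (fun _ : Unit => s(s, t)))
        (Sum.elim (fun e : G.edgeSet => X e ω) (fun _ : Unit => (1 : ℝ))) s t)
      =ᵐ[P] A.indicator (fun _ => (1 : ℝ)) := by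
    refine Filter.eventuallyEq_of_mem ?_ hpt
    rw [mem_ae_iff]
    simpa using hNnull
  rw [integral_congr_ae hae, integral_indicator_const (1 : ℝ) hA, smul_eq_mul, mul_one, measureReal_def]
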